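/- For γ = 5/3, the ratio of eigenvalues k(r) = (r - 2 - √(2r-2))/(r - 2 + √(2r-2)) is a strictly monotonically increasing function of r on the interval (1, 3 - √3), and k(r) → ∞ as r → (3 - √3)⁻. -/

import Mathlib

open Real Set Filter

lemma stmt2_sqrt3_sq : Real.sqrt 3 ^ 2 = 3 := Real.sq_sqrt (by norm_num)

lemma stmt2_sqrt3_gt : (1:ℝ) < Real.sqrt 3 := by
  nlinarith [stmt2_sqrt3_sq, Real.sqrt_nonneg 3]

lemma stmt2_sqrt3_lt : Real.sqrt 3 < 2 := by
  nlinarith [stmt2_sqrt3_sq, Real.sqrt_nonneg 3]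

lemma stmt2_key {r : ℝ} (hr : r ∈ Set.Ioo 1 (3 - Real.sqrt 3)) :
    Real.sqrt (2 * r - 2) < 2 - r := by
  have h1 := hr.1
  have h2 := hr.2
  have hr2 : r < 2 := by linarith [stmt2_sqrt3_gt]
  rw [Real.sqrt_lt' (by linarith)]
  nlinarith [stmt2_sqrt3_sq, Real.sqrt_nonneg 3]

lemma stmt2_repr (k : ℝ → ℝ)
    (hk : ∀ r, k r = (r - 2 - Real.sqrt (2 * r - 2)) / (r - 2 + Real.sqrt (2 * r - 2)))
    {r : ℝ} (hr : r ∈ Set.Ioo 1 (3 - Real.sqrt 3)) :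
    k r = 1 + 4 * Real.sqrt (2 * r - 2) / (4 - 2 * r - 2 * Real.sqrt (2 * r - 2)) := by
  have h := stmt2_key hr
  have hD : r - 2 + Real.sqrt (2 * r - 2) ≠ 0 := by
    intro h0; nlinarith
  have hg : 4 - 2 * r - 2 * Real.sqrt (2 * r - 2) ≠ 0 := by
    intro h0; nlinarith
  rw [hk]
  rw [add_div' _ _ _ hg, div_eq_div_iff hD hg]
  ring

theorem stmt_2 (k : ℝ → ℝ)
    (hk : ∀ r, k r = (r - 2 - Real.sqrt (2 * r - 2)) / (r - 2 + Real.sqrt (2 * r - 2))) :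
    StrictMonoOn k (Set.Ioo 1 (3 - Real.sqrt 3))
      ∧ Filter.Tendsto k (nhdsWithin (3 - Real.sqrt 3) (Set.Iio (3 - Real.sqrt 3)))
          Filter.atTop := by
  constructor
  · intro a ha b hb hab
    rw [stmt2_repr k hk ha, stmt2_repr k hk hb]
    have hka := stmt2_key ha
    have hkb := stmt2_key hb
    have hsa : 0 ≤ Real.sqrt (2 * a - 2) := Real.sqrt_nonneg _
    have hsb : 0 ≤ Real.sqrt (2 * b - 2) := Real.sqrt_nonneg _
    have hss : Real.sqrt (2 * a - 2) < Real.sqrt (2 * b - 2) := by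
      apply Real.sqrt_lt_sqrt (by linarith [ha.1]) (by linarith)
    have hga : 0 < 4 - 2 * a - 2 * Real.sqrt (2 * a - 2) := by linarith [ha.2]
    have hgb : 0 < 4 - 2 * b - 2 * Real.sqrt (2 * b - 2) := by linarith [hb.2]
    have : 4 * Real.sqrt (2 * a - 2) / (4 - 2 * a - 2 * Real.sqrt (2 * a - 2))
        < 4 * Real.sqrt (2 * b - 2) / (4 - 2 * b - 2 * Real.sqrt (2 * b - 2)) := by
      rw [div_lt_div_iff₀ hga hgb]
      nlinarith
    linarith
  · set c : ℝ := 3 - Real.sqrt 3 with hc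
    have hc1 : (1:ℝ) < c := by simp [hc]; linarith [stmt2_sqrt3_lt]
    have hIoo : Set.Ioo 1 c ∈ nhdsWithin c (Set.Iio c) := by
      rw [mem_nhdsWithin]
      exact ⟨Set.Ioi 1, isOpen_Ioi, hc1, by
        rintro x ⟨hx1, hx2⟩; exact ⟨hx1, hx2⟩⟩
    have hsc : Real.sqrt (2 * c - 2) = Real.sqrt 3 - 1 := by
      have : 2 * c - 2 = (Real.sqrt 3 - 1) ^ 2 := by
        nlinarith [stmt2_sqrt3_sq]
      rw [this, Real.sqrt_sq (by linarith [stmt2_sqrt3_gt])]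
    -- continuity facts
    have hcontg : Filter.Tendsto (fun r => 4 - 2 * r - 2 * Real.sqrt (2 * r - 2))
        (nhdsWithin c (Set.Iio c)) (nhds 0) := by
      have : ContinuousAt (fun r : ℝ => 4 - 2 * r - 2 * Real.sqrt (2 * r - 2)) c := by
        fun_prop
      have h0 : 4 - 2 * c - 2 * Real.sqrt (2 * c - 2) = 0 := by
        rw [hsc]; simp [hc]; ring
      have := this.tendsto.mono_left (nhdsWithin_le_nhds (s := Set.Iio c))
      rwa [h0] at this
    have hgpos : ∀ᶠ r in nhdsWithin c (Set.Iio c),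
        0 < 4 - 2 * r - 2 * Real.sqrt (2 * r - 2) := by
      filter_upwards [hIoo] with r hr
      linarith [stmt2_key hr, hr.2]
    have hginv : Filter.Tendsto (fun r => (4 - 2 * r - 2 * Real.sqrt (2 * r - 2))⁻¹)
        (nhdsWithin c (Set.Iio c)) Filter.atTop := by
      apply Filter.Tendsto.inv_tendsto_nhdsGT_zero
      rw [tendsto_nhdsWithin_iff]
      exact ⟨hcontg, hgpos⟩
    have hnum : Filter.Tendsto (fun r => 4 * Real.sqrt (2 * r - 2))
        (nhdsWithin c (Set.Iio c)) (nhds (4 * (Real.sqrt 3 - 1))) := by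
      have : ContinuousAt (fun r : ℝ => 4 * Real.sqrt (2 * r - 2)) c := by fun_prop
      have h := this.tendsto.mono_left (nhdsWithin_le_nhds (s := Set.Iio c))
      simpa [hsc] using h
    have hmul : Filter.Tendsto
        (fun r => 4 * Real.sqrt (2 * r - 2) * (4 - 2 * r - 2 * Real.sqrt (2 * r - 2))⁻¹)
        (nhdsWithin c (Set.Iio c)) Filter.atTop := by
      apply Filter.Tendsto.pos_mul_atTop (C := 4 * (Real.sqrt 3 - 1)) _ hnum hginv
      nlinarith [stmt2_sqrt3_gt]
    have hfinal : Filter.Tendsto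
        (fun r => 1 + 4 * Real.sqrt (2 * r - 2) / (4 - 2 * r - 2 * Real.sqrt (2 * r - 2)))
        (nhdsWithin c (Set.Iio c)) Filter.atTop := by
      simpa [div_eq_mul_inv] using tendsto_atTop_add_const_left _ 1 hmul
    apply hfinal.congr'
    filter_upwards [hIoo] with r hr
    exact (stmt2_repr k hk hr).symm
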